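/- arXiv:1609.04179 — 3 statements merged into one kernel-verified Lean document; each statement's English description precedes it below -/
import Mathlib

section
/- Let 0 < λ₁ ≤ λ₂ ≤ … ≤ λₙ be positive real numbers, λ_A = (λ₁ + … + λₙ)/n their arithmetic mean and λ_G = (λ₁⋯λₙ)^{1/n} their geometric mean. Then Σ_{i=1}^{n} (λᵢ − λ_G)² ≤ 2 n λₙ (λ_A − λ_G). -/
lemma alzer_key (G M x : ℝ) (hG : 0 < G) (hx : 0 < x) (hxM : x ≤ M) (hGM : G ≤ M) :
    (x - G) ^ 2 ≤ 2 * M * (x - G + G * (Real.log G - Real.log x)) := by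
  have hM : 0 < M := lt_of_lt_of_le hG hGM
  set F : ℝ → ℝ := fun y => y - G * Real.log y - (y - G) ^ 2 / (2 * M) with hF
  have hder : ∀ y : ℝ, 0 < y → HasDerivAt F (1 - G / y - (y - G) / M) y := by
    intro y hy
    have h1 : HasDerivAt F
        (1 - G * y⁻¹ - (↑2 * (y - G) ^ 1 * 1) / (2 * M)) y :=
      ((hasDerivAt_id y).sub ((Real.hasDerivAt_log (ne_of_gt hy)).const_mul G)).sub
        ((((hasDerivAt_id y).sub_const G).pow 2).div_const (2 * M))
    convert h1 using 1
    field_simp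
  have hkey : F G ≤ F x := by
    rcases le_total G x with hGx | hGx
    · have hmono : MonotoneOn F (Set.Icc G M) := by
        apply monotoneOn_of_deriv_nonneg (convex_Icc G M)
        · exact fun y hy => ((hder y (lt_of_lt_of_le hG hy.1)).differentiableAt.continuousAt.continuousWithinAt)
        · intro y hy
          rw [interior_Icc] at hy
          exact ((hder y (lt_of_lt_of_le hG hy.1.le)).differentiableAt.differentiableWithinAt)
        · intro y hy
          rw [interior_Icc] at hy
          have hy0 : 0 < y := lt_trans hG hy.1
          rw [(hder y hy0).deriv]
          have h : 1 - G / y - (y - G) / M = (y - G) * (M - y) / (y * M) := by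
            field_simp
          rw [h]
          exact div_nonneg (mul_nonneg (by linarith [hy.1.le]) (by linarith [hy.2.le])) (by positivity)
      exact hmono ⟨le_refl G, hGM⟩ ⟨hGx, hxM⟩ hGx
    · have hanti : AntitoneOn F (Set.Icc x G) := by
        apply antitoneOn_of_deriv_nonpos (convex_Icc x G)
        · exact fun y hy => ((hder y (lt_of_lt_of_le hx hy.1)).differentiableAt.continuousAt.continuousWithinAt)
        · intro y hy
          rw [interior_Icc] at hy
          exact ((hder y (lt_of_lt_of_le hx hy.1.le)).differentiableAt.differentiableWithinAt)
        · intro y hy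
          rw [interior_Icc] at hy
          have hy0 : 0 < y := lt_trans hx hy.1
          rw [(hder y hy0).deriv]
          have h : 1 - G / y - (y - G) / M = (y - G) * (M - y) / (y * M) := by
            field_simp
          rw [h]
          apply div_nonpos_of_nonpos_of_nonneg
          · exact mul_nonpos_of_nonpos_of_nonneg (by linarith [hy.2.le]) (by linarith [hy.2.le])
          · positivity
      exact hanti ⟨le_refl x, hGx⟩ ⟨hGx, le_refl G⟩ hGx
  -- unfold
  have hFG : F G = G - G * Real.log G := by simp [hF]
  have hFx : F x = x - G * Real.log x - (x - G) ^ 2 / (2 * M) := rfl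
  rw [hFG, hFx] at hkey
  have h2M : (0:ℝ) < 2 * M := by positivity
  rw [← sub_nonneg] at hkey ⊢
  have h1 := mul_le_mul_of_nonneg_left hkey h2M.le
  have hdiv : 2 * M * ((x - G) ^ 2 / (2 * M)) = (x - G) ^ 2 := by field_simp
  nlinarith [h1, hdiv]


/-- **Alzer's quantitative arithmetic–geometric mean inequality.**
For positive reals `0 < λ₁ ≤ … ≤ λₙ`, with arithmetic mean `λ_A` and geometric
mean `λ_G`, one has `∑ᵢ (λᵢ − λ_G)² ≤ 2 n λₙ (λ_A − λ_G)`. -/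
theorem alzer_quantitative_amgm (n : ℕ) (hn : 0 < n) (l : Fin n → ℝ)
    (hmono : Monotone l) (hpos : ∀ i, 0 < l i) :
    ∑ i, (l i - (∏ i, l i) ^ ((1 : ℝ) / n)) ^ 2 ≤
      2 * n * l ⟨n - 1, Nat.sub_lt hn Nat.one_pos⟩ *
        ((∑ i, l i) / n - (∏ i, l i) ^ ((1 : ℝ) / n)) := by
  set M := l ⟨n - 1, Nat.sub_lt hn Nat.one_pos⟩ with hMdef
  have hPpos : 0 < ∏ i, l i := Finset.prod_pos (fun i _ => hpos i)
  set G := (∏ i, l i) ^ ((1 : ℝ) / n) with hGdef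
  have hGpos : 0 < G := Real.rpow_pos_of_pos hPpos _
  have hMpos : 0 < M := hpos _
  have hnR : (0 : ℝ) < n := Nat.cast_pos.mpr hn
  have hle : ∀ i, l i ≤ M := by
    intro i
    exact hmono (Fin.mk_le_mk.mpr (Nat.le_pred_of_lt i.isLt) : i ≤ _)
  have hGM : G ≤ M := by
    have hP : ∏ i, l i ≤ M ^ n := by
      calc ∏ i, l i ≤ ∏ _i : Fin n, M :=
            Finset.prod_le_prod (fun i _ => (hpos i).le) (fun i _ => hle i)
        _ = M ^ n := by simp
    have h1 : G ≤ (M ^ n) ^ ((1 : ℝ) / n) :=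
      Real.rpow_le_rpow hPpos.le hP (by positivity)
    have h2 : ((M : ℝ) ^ n) ^ ((1 : ℝ) / n) = M := by
      rw [← Real.rpow_natCast M n, ← Real.rpow_mul hMpos.le, mul_one_div,
        div_self hnR.ne', Real.rpow_one]
    linarith
  have hlogG : Real.log G = (1 / n) * Real.log (∏ i, l i) := Real.log_rpow hPpos _
  have hlogP : Real.log (∏ i, l i) = ∑ i, Real.log (l i) :=
    Real.log_prod (fun i _ => (hpos i).ne')
  have hsum0 : ∑ i, (Real.log G - Real.log (l i)) = 0 := by
    rw [Finset.sum_sub_distrib, ← hlogP, Finset.sum_const, Finset.card_univ,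
      Fintype.card_fin, nsmul_eq_mul, hlogG]
    field_simp
    ring
  have hpt : ∀ i, (l i - G) ^ 2 ≤ 2 * M * (l i - G + G * (Real.log G - Real.log (l i))) :=
    fun i => alzer_key G M (l i) hGpos (hpos i) (hle i) hGM
  calc ∑ i, (l i - G) ^ 2
      ≤ ∑ i, 2 * M * (l i - G + G * (Real.log G - Real.log (l i))) :=
        Finset.sum_le_sum (fun i _ => hpt i)
    _ = 2 * n * M * ((∑ i, l i) / n - G) := by
        rw [← Finset.mul_sum]
        have hsplit : ∑ i, (l i - G + G * (Real.log G - Real.log (l i)))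
            = ((∑ i, l i) - n * G) + G * ∑ i, (Real.log G - Real.log (l i)) := by
          rw [Finset.sum_add_distrib, Finset.sum_sub_distrib, Finset.sum_const,
            Finset.card_univ, Fintype.card_fin, nsmul_eq_mul, ← Finset.mul_sum]
        rw [hsplit, hsum0, mul_zero, add_zero]
        field_simp
end

section
/- Let 0 < λ₁ ≤ … ≤ λₙ be positive reals with geometric mean λ_G = (λ₁⋯λₙ)^{1/n} = 1, and set H = (Σ_{i=1}^n (λᵢ − 1)²)^{1/2} and λ_A = (λ₁ + … + λₙ)/n. Then λ_A − 1 ≥ H²/(2n λₙ) ≥ H²/(2n(1 + H)) ≥ (c/n) 𝓕(H) for some universal constant c > 0. -/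
/-- Pointwise key inequality: for `0 < x ≤ M` with `1 ≤ M`,
`(x-1)²/(2M) ≤ x - 1 - log x`. -/
lemma amgm_key_pointwise (M : ℝ) (hM : 1 ≤ M) {x : ℝ} (hx : 0 < x) (hxM : x ≤ M) :
    (x - 1) ^ 2 / (2 * M) ≤ x - 1 - Real.log x := by
  have hM0 : (0 : ℝ) < M := lt_of_lt_of_le one_pos hM
  set g : ℝ → ℝ := fun y => y - 1 - Real.log y - (y - 1) ^ 2 / (2 * M) with hg
  have hg1 : g 1 = 0 := by simp [hg]
  have hderiv : ∀ y : ℝ, 0 < y →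
      HasDerivAt g ((y - 1) * (M - y) / (y * M)) y := by
    intro y hy
    have h1 : HasDerivAt (fun z : ℝ => z - 1) 1 y := (hasDerivAt_id y).sub_const 1
    have h2 : HasDerivAt Real.log y⁻¹ y := Real.hasDerivAt_log hy.ne'
    have h3 : HasDerivAt (fun z : ℝ => (z - 1) ^ 2 / (2 * M)) ((y - 1) / M) y := by
      have h4 : HasDerivAt (fun z : ℝ => (z - 1) ^ 2) (2 * (y - 1)) y := by
        have := ((hasDerivAt_id y).sub_const 1).pow 2
        simpa [Pi.pow_def] using this
      have := h4.div_const (2 * M)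
      refine this.congr_deriv ?_
      field_simp
    have := (h1.sub h2).sub h3
    refine this.congr_deriv ?_
    field_simp
  have hcont : ∀ D : Set ℝ, D ⊆ Set.Ioi (0 : ℝ) → ContinuousOn g D := by
    intro D hD
    exact fun y hy => ((hderiv y (hD hy)).continuousAt).continuousWithinAt
  -- case split on x ≤ 1 or 1 ≤ x
  have key : 0 ≤ g x := by
    rcases le_total 1 x with h1x | hx1
    · -- monotone on [1, M]
      have hmono : MonotoneOn g (Set.Icc 1 M) := by
        apply monotoneOn_of_hasDerivWithinAt_nonneg (convex_Icc 1 M)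
          (hcont _ (fun y hy => lt_of_lt_of_le one_pos (by
            rw [Set.mem_Icc] at hy; exact hy.1)))
          (f' := fun y => (y - 1) * (M - y) / (y * M))
        · intro y hy
          rw [interior_Icc] at hy
          exact (hderiv y (lt_trans one_pos hy.1)).hasDerivWithinAt
        · intro y hy
          rw [interior_Icc] at hy
          have h1 : (0 : ℝ) ≤ y - 1 := by linarith [hy.1]
          have h2 : (0 : ℝ) ≤ M - y := by linarith [hy.2]
          have h3 : (0 : ℝ) < y * M := mul_pos (lt_trans one_pos hy.1) hM0
          positivity
      have := hmono (Set.mem_Icc.2 ⟨le_refl 1, hM⟩) (Set.mem_Icc.2 ⟨h1x, hxM⟩) h1x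
      rwa [hg1] at this
    · -- antitone on [x, 1]
      have hanti : AntitoneOn g (Set.Icc x 1) := by
        apply antitoneOn_of_hasDerivWithinAt_nonpos (convex_Icc x 1)
          (hcont _ (fun y hy => lt_of_lt_of_le hx (by
            rw [Set.mem_Icc] at hy; exact hy.1)))
          (f' := fun y => (y - 1) * (M - y) / (y * M))
        · intro y hy
          rw [interior_Icc] at hy
          exact (hderiv y (lt_trans hx hy.1)).hasDerivWithinAt
        · intro y hy
          rw [interior_Icc] at hy
          have hy0 : 0 < y := lt_trans hx hy.1
          have h1 : y - 1 ≤ 0 := by linarith [hy.2]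
          have h2 : (0 : ℝ) ≤ M - y := by linarith [hy.2]
          have h3 : (0 : ℝ) < y * M := mul_pos hy0 hM0
          exact div_nonpos_of_nonpos_of_nonneg (mul_nonpos_of_nonpos_of_nonneg h1 h2) h3.le
      have := hanti (Set.mem_Icc.2 ⟨le_refl x, hx1⟩) (Set.mem_Icc.2 ⟨hx1, le_refl 1⟩) hx1
      rwa [hg1] at this
  have : (x - 1) ^ 2 / (2 * M) ≤ x - 1 - Real.log x := by
    have := key
    simp only [hg] at this
    linarith
  exact this

/-- `log (1+H) ≥ H/(1+H)` for `H ≥ 0`. -/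
lemma log_one_add_ge_div (H : ℝ) (hH : 0 ≤ H) : H / (1 + H) ≤ Real.log (1 + H) := by
  have h1 : (0 : ℝ) < 1 + H := by linarith
  have h2 := Real.log_le_sub_one_of_pos (inv_pos.2 h1)
  rw [Real.log_inv] at h2
  have h3 : 1 - (1 + H)⁻¹ ≤ Real.log (1 + H) := by linarith
  have h4 : H / (1 + H) = 1 - (1 + H)⁻¹ := by field_simp; ring
  rw [h4]; exact h3

/-- If `0 < λ₁ ≤ … ≤ λₙ` have geometric mean `λ_G = 1` and
`H = (∑ᵢ (λᵢ − 1)²)^{1/2}`, then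
`λ_A − 1 ≥ H²/(2nλₙ) ≥ H²/(2n(1+H)) ≥ (c/n) 𝓕(H)` for a universal constant `c > 0`,
where `𝓕(t) = t − log(1+t)`. -/
theorem amgm_deficit_lower_bound :
    ∃ c : ℝ, 0 < c ∧
      ∀ (n : ℕ) (hn : 0 < n) (l : Fin n → ℝ),
        Monotone l → (∀ i, 0 < l i) → (∏ i, l i) ^ ((1 : ℝ) / n) = 1 →
        ∀ H : ℝ, H = Real.sqrt (∑ i, (l i - 1) ^ 2) →
          (∑ i, l i) / n - 1 ≥ H ^ 2 / (2 * n * l ⟨n - 1, Nat.sub_lt hn Nat.one_pos⟩) ∧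
          H ^ 2 / (2 * n * l ⟨n - 1, Nat.sub_lt hn Nat.one_pos⟩) ≥ H ^ 2 / (2 * n * (1 + H)) ∧
          H ^ 2 / (2 * n * (1 + H)) ≥ (c / n) * (H - Real.log (1 + H)) := by
  refine ⟨1 / 2, by norm_num, ?_⟩
  intro n hn l hmono hpos hG H hH
  have hn' : (0 : ℝ) < n := Nat.cast_pos.2 hn
  set j : Fin n := ⟨n - 1, Nat.sub_lt hn Nat.one_pos⟩ with hj
  set M : ℝ := l j with hMdef
  have hM0 : 0 < M := hpos j
  -- every l i ≤ M
  have hle : ∀ i, l i ≤ M := by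
    intro i
    apply hmono
    have := i.isLt
    exact Fin.mk_le_mk.mpr (by omega) |>.trans_eq rfl
  -- product equals 1
  have hprodpos : 0 < ∏ i, l i := Finset.prod_pos fun i _ => hpos i
  have hprod : ∏ i, l i = 1 := by
    have h1 : ((∏ i, l i) ^ ((1 : ℝ) / n)) ^ (n : ℝ) = ∏ i, l i := by
      rw [← Real.rpow_mul hprodpos.le, one_div,
        inv_mul_cancel₀ (by exact_mod_cast hn.ne' : (n : ℝ) ≠ 0), Real.rpow_one]
    rw [← h1, hG, Real.one_rpow]
  -- sum of logs is 0
  have hlog : ∑ i, Real.log (l i) = 0 := by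
    rw [← Real.log_prod (s := Finset.univ) (fun i _ => (hpos i).ne'), hprod, Real.log_one]
  -- M ≥ 1
  have hM1 : 1 ≤ M := by
    by_contra hlt
    push_neg at hlt
    have : ∏ i, l i ≤ ∏ _i : Fin n, M :=
      Finset.prod_le_prod (fun i _ => (hpos i).le) (fun i _ => hle i)
    rw [hprod, Finset.prod_const] at this
    simp only [Finset.card_univ, Fintype.card_fin] at this
    have : M ^ n < 1 := pow_lt_one₀ hM0.le hlt hn.ne'
    linarith
  have hHnn : 0 ≤ H := hH ▸ Real.sqrt_nonneg _
  have hsumnn : 0 ≤ ∑ i, (l i - 1) ^ 2 := Finset.sum_nonneg fun i _ => sq_nonneg _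
  have hH2 : H ^ 2 = ∑ i, (l i - 1) ^ 2 := by
    rw [hH, Real.sq_sqrt hsumnn]
  -- key sum inequality
  have hsum : H ^ 2 / (2 * M) ≤ (∑ i, l i) - n := by
    have h1 : ∀ i, (l i - 1) ^ 2 / (2 * M) ≤ l i - 1 - Real.log (l i) :=
      fun i => amgm_key_pointwise M hM1 (hpos i) (hle i)
    have h2 : ∑ i, (l i - 1) ^ 2 / (2 * M) ≤ ∑ i, (l i - 1 - Real.log (l i)) :=
      Finset.sum_le_sum fun i _ => h1 i
    have h3 : ∑ i, (l i - 1 - Real.log (l i)) = (∑ i, l i) - n := by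
      rw [Finset.sum_sub_distrib, Finset.sum_sub_distrib, hlog, sub_zero,
        Finset.sum_const, Finset.card_univ, Fintype.card_fin, nsmul_eq_mul, mul_one]
    have h4 : ∑ i, (l i - 1) ^ 2 / (2 * M) = H ^ 2 / (2 * M) := by
      rw [← Finset.sum_div, hH2]
    rw [h4, h3] at h2
    exact h2
  -- part 1
  have part1 : (∑ i, l i) / n - 1 ≥ H ^ 2 / (2 * n * M) := by
    have heq : H ^ 2 / (2 * (n : ℝ) * M) = (H ^ 2 / (2 * M)) / n := by
      rw [div_div]; ring_nf
    rw [ge_iff_le, heq]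
    have h5 : (H ^ 2 / (2 * M)) / (n : ℝ) ≤ ((∑ i, l i) - n) / n :=
      div_le_div_of_nonneg_right hsum hn'.le
    calc (H ^ 2 / (2 * M)) / (n : ℝ) ≤ ((∑ i, l i) - n) / n := h5
      _ = (∑ i, l i) / n - 1 := by field_simp
  -- part 2: M ≤ 1 + H
  have hMle : M ≤ 1 + H := by
    have h1 : (M - 1) ^ 2 ≤ ∑ i, (l i - 1) ^ 2 :=
      Finset.single_le_sum (fun i _ => sq_nonneg (l i - 1)) (Finset.mem_univ j)
    have h2 : |M - 1| ≤ H := by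
      rw [hH, ← Real.sqrt_sq_eq_abs]
      exact Real.sqrt_le_sqrt h1
    have := abs_le.1 h2
    linarith [this.2]
  have part2 : H ^ 2 / (2 * n * M) ≥ H ^ 2 / (2 * n * (1 + H)) := by
    apply div_le_div_of_nonneg_left (sq_nonneg H)
    · positivity
    · nlinarith
  -- part 3
  have part3 : H ^ 2 / (2 * n * (1 + H)) ≥ ((1 : ℝ) / 2 / n) * (H - Real.log (1 + H)) := by
    have h1H : (0 : ℝ) < 1 + H := by linarith
    have h1 : H - Real.log (1 + H) ≤ H ^ 2 / (1 + H) := by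
      have h2 := log_one_add_ge_div H hHnn
      have h3 : H - H / (1 + H) = H ^ 2 / (1 + H) := by
        field_simp; ring
      linarith
    have h4 : ((1 : ℝ) / 2 / n) * (H - Real.log (1 + H)) ≤
        ((1 : ℝ) / 2 / n) * (H ^ 2 / (1 + H)) := by
      apply mul_le_mul_of_nonneg_left h1
      positivity
    have h5 : ((1 : ℝ) / 2 / n) * (H ^ 2 / (1 + H)) = H ^ 2 / (2 * n * (1 + H)) := by
      field_simp
    rw [ge_iff_le]
    rw [h5] at h4
    exact h4
  exact ⟨part1, part2, part3⟩
end

section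
/- For α > 0, let E_α = [−α/2, α/2] × [−1/(2α), 1/(2α)] and K_α = [−α²/2, α²/2] × [−1/(2α²), 1/(2α²)] be rectangles of area 1 in ℝ². Then W₁(λ_{E_α}, λ_{K_α}) ≥ (1/4)(α²/4 − α/2). -/
open MeasureTheory
open scoped ENNReal

/-- The normalized Lebesgue measure `λ_A` on a set `A`. -/
noncomputable def lambdaMeas (n : ℕ) (A : Set (EuclideanSpace ℝ (Fin n))) :
    Measure (EuclideanSpace ℝ (Fin n)) :=
  (volume A)⁻¹ • volume.restrict A

/-- The `1`-Kantorovich–Rubinstein (Wasserstein) distance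
`W₁(μ,ν) = inf_π ∬ |x−y| dπ(x,y)`, the infimum running over couplings `π` of `μ, ν`. -/
noncomputable def W1 {n : ℕ} (μ ν : Measure (EuclideanSpace ℝ (Fin n))) : ℝ :=
  (⨅ (π : Measure (EuclideanSpace ℝ (Fin n) × EuclideanSpace ℝ (Fin n)))
    (_ : π.map Prod.fst = μ ∧ π.map Prod.snd = ν), ∫⁻ p, edist p.1 p.2 ∂π).toReal

/-- The rectangle `E_α = [−α/2, α/2] × [−1/(2α), 1/(2α)] ⊂ ℝ²`. -/
def rectE (α : ℝ) : Set (EuclideanSpace ℝ (Fin 2)) :=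
  {x | x 0 ∈ Set.Icc (-(α / 2)) (α / 2) ∧ x 1 ∈ Set.Icc (-(1 / (2 * α))) (1 / (2 * α))}

/-- The rectangle `K_α = [−α²/2, α²/2] × [−1/(2α²), 1/(2α²)] ⊂ ℝ²`. -/
def rectK (α : ℝ) : Set (EuclideanSpace ℝ (Fin 2)) :=
  {x | x 0 ∈ Set.Icc (-(α ^ 2 / 2)) (α ^ 2 / 2) ∧
       x 1 ∈ Set.Icc (-(1 / (2 * α ^ 2))) (1 / (2 * α ^ 2))}

lemma aux_proj_meas (i : Fin 2) : Measurable (fun x : EuclideanSpace ℝ (Fin 2) => x i) :=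
  (measurable_pi_apply i).comp (WithLp.measurable_ofLp 2 _)

lemma aux_box_meas (a b c d : ℝ) : MeasurableSet
    {x : EuclideanSpace ℝ (Fin 2) | x 0 ∈ Set.Icc a b ∧ x 1 ∈ Set.Icc c d} :=
  ((aux_proj_meas 0) measurableSet_Icc).inter ((aux_proj_meas 1) measurableSet_Icc)

lemma aux_box_vol (a b c d : ℝ) :
    volume {x : EuclideanSpace ℝ (Fin 2) | x 0 ∈ Set.Icc a b ∧ x 1 ∈ Set.Icc c d}
      = ENNReal.ofReal (b - a) * ENNReal.ofReal (d - c) := by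
  rw [← ((EuclideanSpace.volume_preserving_symm_measurableEquiv_toLp (Fin 2)).symm).measure_preimage
    (aux_box_meas a b c d).nullMeasurableSet]
  have : (MeasurableEquiv.toLp 2 (Fin 2 → ℝ)).symm.symm ⁻¹'
      {x : EuclideanSpace ℝ (Fin 2) | x 0 ∈ Set.Icc a b ∧ x 1 ∈ Set.Icc c d}
      = Set.pi Set.univ ![Set.Icc a b, Set.Icc c d] := by
    ext x
    simp [MeasurableEquiv.symm_symm, MeasurableEquiv.coe_toLp, Fin.forall_fin_two]
  rw [this, volume_pi_pi]
  simp [Fin.prod_univ_two, Real.volume_Icc]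

lemma aux_dist_coord_le (x y : EuclideanSpace ℝ (Fin 2)) (i : Fin 2) :
    |x i - y i| ≤ dist x y := by
  rw [EuclideanSpace.dist_eq]
  have : |x i - y i| = Real.sqrt ((x i - y i)^2) := (Real.sqrt_sq_eq_abs _).symm
  rw [this]
  apply Real.sqrt_le_sqrt
  have := Finset.single_le_sum (f := fun j => dist (x j) (y j)^2)
    (fun j _ => sq_nonneg _) (Finset.mem_univ i)
  simpa [Real.dist_eq] using this

lemma aux_dist_le_coords (x y : EuclideanSpace ℝ (Fin 2)) :
    dist x y ≤ |x 0 - y 0| + |x 1 - y 1| := by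
  rw [EuclideanSpace.dist_eq, Fin.sum_univ_two]
  have h : dist (x 0) (y 0) ^ 2 + dist (x 1) (y 1) ^ 2 ≤ (|x 0 - y 0| + |x 1 - y 1|)^2 := by
    simp only [Real.dist_eq]
    nlinarith [abs_nonneg (x 0 - y 0), abs_nonneg (x 1 - y 1), sq_abs (x 0 - y 0),
      sq_abs (x 1 - y 1)]
  calc Real.sqrt (dist (x 0) (y 0) ^ 2 + dist (x 1) (y 1) ^ 2)
      ≤ Real.sqrt ((|x 0 - y 0| + |x 1 - y 1|)^2) := Real.sqrt_le_sqrt h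
    _ = |(|x 0 - y 0| + |x 1 - y 1|)| := Real.sqrt_sq_eq_abs _
    _ = |x 0 - y 0| + |x 1 - y 1| := abs_of_nonneg (by positivity)

/-- For the unit-area rectangles `E_α` and `K_α` in `ℝ²`,
`W₁(λ_{E_α}, λ_{K_α}) ≥ (1/4)(α²/4 − α/2)`. -/
theorem W1_rectangles_lower_bound (α : ℝ) (hα : 0 < α) :
    W1 (lambdaMeas 2 (rectE α)) (lambdaMeas 2 (rectK α)) ≥
      (1 / 4) * (α ^ 2 / 4 - α / 2) := by
  rcases le_or_gt α 2 with h2 | h2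
  · have h0 : (1 / 4) * (α ^ 2 / 4 - α / 2) ≤ 0 := by nlinarith
    exact le_trans h0 ENNReal.toReal_nonneg
  -- now α > 2
  have hα2 : (0:ℝ) < α ^ 2 := by positivity
  have hEm : MeasurableSet (rectE α) := aux_box_meas _ _ _ _
  have hKm : MeasurableSet (rectK α) := aux_box_meas _ _ _ _
  have volE : volume (rectE α) = 1 := by
    have h1 : (α / 2 - -(α / 2)) * ((1 / (2 * α)) - -(1 / (2 * α))) = 1 := by field_simp; ring
    rw [rectE, aux_box_vol, ← ENNReal.ofReal_mul (by linarith), h1, ENNReal.ofReal_one]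
  have volK : volume (rectK α) = 1 := by
    have h1 : (α ^ 2 / 2 - -(α ^ 2 / 2)) * ((1 / (2 * α ^ 2)) - -(1 / (2 * α ^ 2))) = 1 := by
      field_simp; ring
    rw [rectK, aux_box_vol, ← ENNReal.ofReal_mul (by linarith), h1, ENNReal.ofReal_one]
  have hμ : lambdaMeas 2 (rectE α) = volume.restrict (rectE α) := by
    rw [lambdaMeas, volE]; simp
  have hν : lambdaMeas 2 (rectK α) = volume.restrict (rectK α) := by
    rw [lambdaMeas, volK]; simp
  haveI hPE : IsProbabilityMeasure (volume.restrict (rectE α)) :=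
    ⟨by rw [Measure.restrict_apply_univ, volE]⟩
  haveI hPK : IsProbabilityMeasure (volume.restrict (rectK α)) :=
    ⟨by rw [Measure.restrict_apply_univ, volK]⟩
  -- the strip S inside K, far from E
  set S : Set (EuclideanSpace ℝ (Fin 2)) :=
    {x | x 0 ∈ Set.Icc ((α ^ 2 + α) / 4) (α ^ 2 / 2) ∧
         x 1 ∈ Set.Icc (-(1 / (2 * α ^ 2))) (1 / (2 * α ^ 2))} with hS
  have hSm : MeasurableSet S := aux_box_meas _ _ _ _
  have hSsubK : S ⊆ rectK α := by
    rintro x ⟨⟨hx1, hx2⟩, hx3⟩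
    refine ⟨⟨?_, hx2⟩, hx3⟩
    nlinarith
  have volS : volume S = ENNReal.ofReal ((α - 1) / (4 * α)) := by
    have h1 : (α ^ 2 / 2 - (α ^ 2 + α) / 4) * ((1 / (2 * α ^ 2)) - -(1 / (2 * α ^ 2)))
        = (α - 1) / (4 * α) := by field_simp; ring
    rw [hS, aux_box_vol, ← ENNReal.ofReal_mul (by nlinarith), h1]
  have hνS : (volume.restrict (rectK α)) S = ENNReal.ofReal ((α - 1) / (4 * α)) := by
    rw [Measure.restrict_apply hSm, Set.inter_eq_left.mpr hSsubK, volS]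
  set I : ℝ≥0∞ := ⨅ (π : Measure (EuclideanSpace ℝ (Fin 2) × EuclideanSpace ℝ (Fin 2)))
    (_ : π.map Prod.fst = lambdaMeas 2 (rectE α) ∧ π.map Prod.snd = lambdaMeas 2 (rectK α)),
    ∫⁻ p, edist p.1 p.2 ∂π with hI
  -- Lower bound for every coupling
  have hlow : ENNReal.ofReal ((α - 1) ^ 2 / 16) ≤ I := by
    refine le_iInf₂ fun π hπ => ?_
    obtain ⟨hπ1, hπ2⟩ := hπ
    rw [hμ] at hπ1; rw [hν] at hπ2
    have hπE : π (Prod.fst ⁻¹' (rectE α)ᶜ) = 0 := by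
      rw [← Measure.map_apply measurable_fst hEm.compl, hπ1,
        Measure.restrict_apply hEm.compl]
      simp
    have hπS : π ((Set.univ : Set (EuclideanSpace ℝ (Fin 2))) ×ˢ S) = ENNReal.ofReal ((α - 1) / (4 * α)) := by
      have : (Set.univ : Set (EuclideanSpace ℝ (Fin 2))) ×ˢ S = Prod.snd ⁻¹' S := by ext p; simp
      rw [this, ← Measure.map_apply measurable_snd hSm, hπ2, hνS]
    have hES : ENNReal.ofReal ((α - 1) / (4 * α)) ≤ π (rectE α ×ˢ S) := by
      rw [← hπS]
      have hsub : (Set.univ : Set (EuclideanSpace ℝ (Fin 2))) ×ˢ S ⊆ (rectE α ×ˢ S) ∪ (Prod.fst ⁻¹' (rectE α)ᶜ) := by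
        rintro ⟨x, y⟩ ⟨-, hy⟩
        by_cases hx : x ∈ rectE α
        · exact Or.inl ⟨hx, hy⟩
        · exact Or.inr hx
      calc π ((Set.univ : Set (EuclideanSpace ℝ (Fin 2))) ×ˢ S) ≤ π ((rectE α ×ˢ S) ∪ (Prod.fst ⁻¹' (rectE α)ᶜ)) :=
            measure_mono hsub
        _ ≤ π (rectE α ×ˢ S) + π (Prod.fst ⁻¹' (rectE α)ᶜ) := measure_union_le _ _
        _ = π (rectE α ×ˢ S) := by rw [hπE, add_zero]
    have hptwise : ∀ p : EuclideanSpace ℝ (Fin 2) × EuclideanSpace ℝ (Fin 2),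
        (rectE α ×ˢ S).indicator (fun _ => ENNReal.ofReal ((α ^ 2 - α) / 4)) p
          ≤ edist p.1 p.2 := by
      intro p
      by_cases hp : p ∈ rectE α ×ˢ S
      · rw [Set.indicator_of_mem hp]
        obtain ⟨⟨⟨-, h1b⟩, -⟩, ⟨⟨h2a, -⟩, -⟩⟩ := hp
        rw [edist_dist]
        apply ENNReal.ofReal_le_ofReal
        have hd := aux_dist_coord_le p.1 p.2 0
        have habs : p.2 0 - p.1 0 ≤ |p.1 0 - p.2 0| := by
          rw [abs_sub_comm]; exact le_abs_self _
        linarith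
      · rw [Set.indicator_of_notMem hp]; exact zero_le
    calc ENNReal.ofReal ((α - 1) ^ 2 / 16)
        = ENNReal.ofReal ((α ^ 2 - α) / 4) * ENNReal.ofReal ((α - 1) / (4 * α)) := by
          rw [← ENNReal.ofReal_mul (by nlinarith)]
          congr 1
          field_simp; ring
      _ ≤ ENNReal.ofReal ((α ^ 2 - α) / 4) * π (rectE α ×ˢ S) :=
          mul_le_mul_right hES _
      _ = ∫⁻ p, (rectE α ×ˢ S).indicator (fun _ => ENNReal.ofReal ((α ^ 2 - α) / 4)) p ∂π := by
          rw [lintegral_indicator (hEm.prod hSm), setLIntegral_const]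
      _ ≤ ∫⁻ p, edist p.1 p.2 ∂π := lintegral_mono hptwise
  -- Upper bound via the product coupling: I is finite
  have hup : I ≤ ENNReal.ofReal (α / 2 + α ^ 2 / 2 + 1 / (2 * α) + 1 / (2 * α ^ 2)) := by
    set C : ℝ := α / 2 + α ^ 2 / 2 + 1 / (2 * α) + 1 / (2 * α ^ 2) with hC
    set π₀ := (volume.restrict (rectE α)).prod (volume.restrict (rectK α)) with hπ₀
    have hfst : π₀.map Prod.fst = lambdaMeas 2 (rectE α) := by
      rw [hμ, hπ₀, Measure.map_fst_prod, measure_univ, one_smul]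
    have hsnd : π₀.map Prod.snd = lambdaMeas 2 (rectK α) := by
      rw [hν, hπ₀, Measure.map_snd_prod, measure_univ, one_smul]
    have hae : ∀ᵐ p ∂π₀, p ∈ rectE α ×ˢ rectK α := by
      rw [ae_iff]
      refine measure_mono_null (fun p hp => ?_)
        (show π₀ ((Prod.fst ⁻¹' (rectE α)ᶜ) ∪ (Prod.snd ⁻¹' (rectK α)ᶜ)) = 0 from ?_)
      · by_cases h : p.1 ∈ rectE α
        · exact Or.inr fun hk => hp ⟨h, hk⟩
        · exact Or.inl h
      · refine le_antisymm (le_trans (measure_union_le _ _) ?_) (zero_le)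
        have e1 : (Prod.fst ⁻¹' (rectE α)ᶜ) = (rectE α)ᶜ ×ˢ (Set.univ : Set (EuclideanSpace ℝ (Fin 2))) := by ext p; simp
        have e2 : (Prod.snd ⁻¹' (rectK α)ᶜ) = (Set.univ : Set (EuclideanSpace ℝ (Fin 2))) ×ˢ (rectK α)ᶜ := by ext p; simp
        rw [e1, e2, hπ₀, Measure.prod_prod, Measure.prod_prod,
          Measure.restrict_apply hEm.compl, Measure.restrict_apply hKm.compl]
        simp
    have haebound : ∀ᵐ p ∂π₀, edist p.1 p.2 ≤ ENNReal.ofReal C := by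
      filter_upwards [hae] with p hp
      obtain ⟨⟨⟨h1a, h1b⟩, ⟨h1c, h1d⟩⟩, ⟨⟨h2a, h2b⟩, ⟨h2c, h2d⟩⟩⟩ := hp
      rw [edist_dist]
      apply ENNReal.ofReal_le_ofReal
      have hd := aux_dist_le_coords p.1 p.2
      have ha0 : |p.1 0 - p.2 0| ≤ α / 2 + α ^ 2 / 2 := by
        rw [abs_le]; constructor <;> linarith
      have ha1 : |p.1 1 - p.2 1| ≤ 1 / (2 * α) + 1 / (2 * α ^ 2) := by
        rw [abs_le]; constructor <;> linarith
      rw [hC]; linarith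
    have hcost : ∫⁻ p, edist p.1 p.2 ∂π₀ ≤ ENNReal.ofReal C := by
      calc ∫⁻ p, edist p.1 p.2 ∂π₀ ≤ ∫⁻ _, ENNReal.ofReal C ∂π₀ := lintegral_mono_ae haebound
        _ = ENNReal.ofReal C * π₀ Set.univ := lintegral_const _
        _ = ENNReal.ofReal C := by rw [measure_univ, mul_one]
    exact le_trans (iInf₂_le π₀ ⟨hfst, hsnd⟩) hcost
  have hItop : I ≠ ⊤ := ne_top_of_le_ne_top ENNReal.ofReal_ne_top hup
  have hfin : ((α - 1) ^ 2 / 16 : ℝ) ≤ I.toReal := by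
    have := ENNReal.toReal_mono hItop hlow
    rwa [ENNReal.toReal_ofReal (by positivity)] at this
  have : W1 (lambdaMeas 2 (rectE α)) (lambdaMeas 2 (rectK α)) = I.toReal := rfl
  rw [this, ge_iff_le]
  nlinarith
end
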